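/- Fix positive integers m > 2, λ, and coprime a < b. Then for all sufficiently large k, there does not exist a nontrivial (v,m,k,λ)-SEDF (in any abelian group) having the simple character value property with respect to (a,b). Specifically, such an SEDF must satisfy v/k ≤ m + 4a²(m−1)/(m(b²−a²)), while v−1 = k²(m−1)/λ grows quadratically in k. -/

import Mathlib

open Finset

/-- `{D j}` is a `(v, m, k, lam)`-strong external difference family in the
abelian group `G`: mutually disjoint `k`-subsets whose defining group-ring
identity `D_j · (∑_{i≠j} D_i^{(-1)}) = lam (G - 1)` holds in `ℤ[G]`. -/
def IsSEDF {G : Type} [CommGroup G] [Fintype G] [DecidableEq G]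
    (v m k lam : ℕ) (D : Fin m → Finset G) : Prop :=
  Fintype.card G = v ∧ 2 ≤ m ∧ (∀ i, (D i).card = k) ∧
  (∀ i j, i ≠ j → Disjoint (D i) (D j)) ∧
  ∀ j, (∑ d ∈ D j, MonoidAlgebra.of ℤ G d) *
      (∑ i ∈ Finset.univ.erase j, ∑ d ∈ D i, MonoidAlgebra.of ℤ G d⁻¹)
    = (lam : ℤ) • ((∑ g : G, MonoidAlgebra.of ℤ G g) - 1)

/-- The simple character value property with respect to `(a, b)`. -/
def SCVP {G : Type} [CommGroup G] [Fintype G] [DecidableEq G]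
    (lam : ℕ) (DU : Finset G) (a b : ℕ) : Prop :=
  ∀ χ : G →* ℂ, χ ≠ 1 → (∑ d ∈ DU, χ d) ≠ 0 →
    Real.sqrt (1 + 4 * lam / ‖∑ d ∈ DU, χ d‖ ^ 2) = (b : ℝ) / a



def homUnitsEquiv (G : Type) [Group G] : (G →* ℂ) ≃ (G →* ℂˣ) where
  toFun := MonoidHom.toHomUnits
  invFun f := (Units.coeHom ℂ).comp f
  left_inv f := by ext g; rfl
  right_inv f := MonoidHom.ext fun g => Units.ext rfl

section Char
variable {G : Type} [CommGroup G] [Fintype G]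

lemma exp_neZero : NeZero ((Monoid.exponent G : ℂ)) :=
  ⟨Nat.cast_ne_zero.mpr Monoid.exponent_ne_zero_of_finite⟩

lemma nonempty_dualEquiv : Nonempty ((G →* ℂ) ≃ G) := by
  haveI := exp_neZero (G := G)
  obtain ⟨e⟩ := CommGroup.monoidHom_mulEquiv_of_hasEnoughRootsOfUnity G ℂ
  exact ⟨(homUnitsEquiv G).trans e.toEquiv⟩

lemma sum_char_eq_zero [Fintype (G →* ℂ)] {g : G} (hg : g ≠ 1) :
    ∑ χ : G →* ℂ, χ g = 0 := by
  haveI := exp_neZero (G := G)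
  obtain ⟨φ, hφ⟩ := CommGroup.exists_apply_ne_one_of_hasEnoughRootsOfUnity G ℂ hg
  set ψ : G →* ℂ := (Units.coeHom ℂ).comp φ with hψ
  set ψ' : G →* ℂ := (Units.coeHom ℂ).comp φ⁻¹ with hψ'
  have key : ∀ χ : G →* ℂ, ψ' * (ψ * χ) = χ := by
    intro χ; ext x
    simp only [MonoidHom.mul_apply, hψ, hψ', MonoidHom.coe_comp, Function.comp_apply,
      Units.coeHom_apply, MonoidHom.inv_apply, ← mul_assoc, ← Units.val_mul, inv_mul_cancel,
      Units.val_one, one_mul]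
  have key2 : ∀ χ : G →* ℂ, ψ * (ψ' * χ) = χ := by
    intro χ; ext x
    simp only [MonoidHom.mul_apply, hψ, hψ', MonoidHom.coe_comp, Function.comp_apply,
      Units.coeHom_apply, MonoidHom.inv_apply, ← mul_assoc, ← Units.val_mul, mul_inv_cancel,
      Units.val_one, one_mul]
  let e : (G →* ℂ) ≃ (G →* ℂ) := ⟨fun χ => ψ * χ, fun χ => ψ' * χ, key, key2⟩
  have h1 : ∑ χ : G →* ℂ, (ψ * χ) g = ∑ χ : G →* ℂ, χ g :=
    Equiv.sum_comp e (fun χ => χ g)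
  simp only [MonoidHom.mul_apply, ← Finset.mul_sum] at h1
  have hne : ψ g ≠ 1 := by
    simpa [hψ, Units.coeHom_apply] using fun h => hφ (Units.ext h)
  have : (ψ g - 1) * ∑ χ : G →* ℂ, χ g = 0 := by ring_nf; linear_combination h1
  rcases mul_eq_zero.mp this with h | h
  · exact absurd (sub_eq_zero.mp h) hne
  · exact h

lemma card_dual [Fintype (G →* ℂ)] : Fintype.card (G →* ℂ) = Fintype.card G :=
  Fintype.card_congr (nonempty_dualEquiv (G := G)).some

lemma sum_char [DecidableEq G] (g : G) [Fintype (G →* ℂ)] :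
    ∑ χ : G →* ℂ, χ g = if g = 1 then (Fintype.card G : ℂ) else 0 := by
  classical
  split_ifs with h
  · subst h
    simp [card_dual (G := G)]
  · exact sum_char_eq_zero h

lemma conj_char (χ : G →* ℂ) (d : G) : (starRingEnd ℂ) (χ d) = χ d⁻¹ := by
  have h1 : χ d * χ d⁻¹ = 1 := by rw [← map_mul, mul_inv_cancel, map_one]
  have habs : ‖χ d‖ = 1 := by
    have hpow : ‖χ d‖ ^ Fintype.card G = 1 := by
      rw [← norm_pow, ← map_pow, pow_card_eq_one, map_one, norm_one]
    have h0 : (0:ℝ) ≤ ‖χ d‖ := norm_nonneg _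
    have hc : Fintype.card G ≠ 0 := Fintype.card_ne_zero
    rcases lt_trichotomy ‖χ d‖ 1 with h | h | h
    · have := pow_lt_one₀ h0 h hc; rw [hpow] at this; exact absurd this (lt_irrefl _)
    · exact h
    · have := one_lt_pow₀ h hc; rw [hpow] at this; exact absurd this (lt_irrefl _)
  have hinv : (χ d)⁻¹ = (starRingEnd ℂ) (χ d) := Complex.inv_eq_conj habs
  rw [← hinv]
  exact (eq_inv_of_mul_eq_one_left (by rw [mul_comm] at h1; exact h1)).symm

end Char

section Par
variable {G : Type} [CommGroup G] [Fintype G]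

lemma parseval [DecidableEq G] [Fintype (G →* ℂ)] (DU : Finset G) :
    ∑ χ : G →* ℂ, ‖∑ d ∈ DU, χ d‖^2 = (Fintype.card G : ℝ) * DU.card := by
  have key : ∑ χ : G →* ℂ, ((∑ d ∈ DU, χ d) * (starRingEnd ℂ) (∑ d ∈ DU, χ d))
      = ((Fintype.card G : ℂ) * DU.card) := by
    have h1 : ∀ χ : G →* ℂ, (∑ d ∈ DU, χ d) * (starRingEnd ℂ) (∑ d ∈ DU, χ d)
        = ∑ d ∈ DU, ∑ e ∈ DU, χ (d * e⁻¹) := by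
      intro χ
      rw [map_sum, Finset.sum_mul_sum]
      refine Finset.sum_congr rfl fun d _ => Finset.sum_congr rfl fun e _ => ?_
      rw [conj_char, ← map_mul]
    calc ∑ χ : G →* ℂ, ((∑ d ∈ DU, χ d) * (starRingEnd ℂ) (∑ d ∈ DU, χ d))
        = ∑ χ : G →* ℂ, ∑ d ∈ DU, ∑ e ∈ DU, χ (d * e⁻¹) := by
          exact Finset.sum_congr rfl fun χ _ => h1 χ
      _ = ∑ d ∈ DU, ∑ e ∈ DU, ∑ χ : G →* ℂ, χ (d * e⁻¹) := by
          rw [Finset.sum_comm]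
          exact Finset.sum_congr rfl fun d _ => Finset.sum_comm
      _ = ∑ d ∈ DU, ∑ e ∈ DU, if d = e then (Fintype.card G : ℂ) else 0 := by
          refine Finset.sum_congr rfl fun d _ => Finset.sum_congr rfl fun e _ => ?_
          rw [sum_char]
          simp only [mul_inv_eq_one]
      _ = ∑ _d ∈ DU, (Fintype.card G : ℂ) := by
          refine Finset.sum_congr rfl fun d hd => ?_
          simp [Finset.sum_ite_eq, hd]
      _ = ((Fintype.card G : ℂ) * DU.card) := by
          rw [Finset.sum_const, nsmul_eq_mul, mul_comm]
  have lhs : ((∑ χ : G →* ℂ, ‖∑ d ∈ DU, χ d‖^2 : ℝ) : ℂ)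
      = ∑ χ : G →* ℂ, ((∑ d ∈ DU, χ d) * (starRingEnd ℂ) (∑ d ∈ DU, χ d)) := by
    push_cast
    refine Finset.sum_congr rfl fun χ _ => ?_
    rw [Complex.mul_conj, ← Complex.sq_norm]
    push_cast
    ring
  rw [key] at lhs
  exact_mod_cast lhs

end Par
lemma sedf_count {G : Type} [CommGroup G] [Fintype G] [DecidableEq G]
    {v m k lam : ℕ} {D : Fin m → Finset G} (h : IsSEDF v m k lam D) :
    (lam : ℤ) * ((v : ℤ) - 1) = (k : ℤ)^2 * ((m : ℤ) - 1) := by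
  obtain ⟨hv, hm2, hk, -, hid⟩ := h
  have hm0 : 0 < m := by omega
  set j₀ : Fin m := ⟨0, hm0⟩
  set ε := (MonoidAlgebra.lift ℤ ℤ G) 1 with hε'
  have hε : ∀ g : G, ε (MonoidAlgebra.of ℤ G g) = 1 := fun g => by
    simp [hε', MonoidAlgebra.lift_of]
  have key := congrArg ε (hid j₀)
  rw [map_mul, map_sum, map_zsmul, map_sub, map_one, map_sum] at key
  simp only [hε, map_sum] at key
  simp only [Finset.sum_const, Finset.card_univ, smul_eq_mul, mul_one, hk,
    nsmul_eq_mul, Nat.cast_sum] at key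
  rw [Finset.card_erase_of_mem (Finset.mem_univ _), Finset.card_univ,
    Fintype.card_fin, hv] at key
  have hmcast : ((m - 1 : ℕ) : ℤ) = (m : ℤ) - 1 := by
    have : 1 ≤ m := by omega
    push_cast [this]; ring
  rw [hmcast] at key
  linear_combination -key
lemma main_bound {G : Type} [CommGroup G] [Fintype G] [DecidableEq G]
    {m lam a b : ℕ} (hm : 2 < m) (hlam : 0 < lam) (ha : 0 < a) (hab : a < b)
    {v k : ℕ} {D : Fin m → Finset G}
    (hsedf : IsSEDF v m k lam D) (hk : 1 < k)
    (hscvp : SCVP lam (Finset.univ.biUnion D) a b) :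
    (v : ℚ) / k ≤ m + 4 * a ^ 2 * ((m : ℚ) - 1) / (m * ((b : ℚ) ^ 2 - a ^ 2)) := by
  classical
  obtain ⟨e⟩ := nonempty_dualEquiv (G := G)
  haveI : Fintype (G →* ℂ) := Fintype.ofEquiv G e.symm
  have hkeyZ := sedf_count hsedf
  obtain ⟨hv, hm2, hkcard, hdisj, hid⟩ := hsedf
  set DU := Finset.univ.biUnion D with hDU
  have hDUcard : DU.card = m * k := by
    rw [hDU, Finset.card_biUnion (fun i _ j _ hij => hdisj i j hij)]
    simp [hkcard, Finset.card_univ, Finset.sum_const, mul_comm]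
  have haR : (0:ℝ) < a := by exact_mod_cast ha
  have habR : (a:ℝ) < b := by exact_mod_cast hab
  have hB : (0:ℝ) < (b:ℝ)^2 - (a:ℝ)^2 := by nlinarith
  set c : ℝ := 4*lam*(a:ℝ)^2/((b:ℝ)^2 - (a:ℝ)^2) with hc
  have hc0 : 0 ≤ c := by positivity
  have hterm : ∀ χ ∈ Finset.univ.erase (1 : G →* ℂ),
      ‖∑ d ∈ DU, χ d‖^2 ≤ c := by
    intro χ hχ
    have hχ1 : χ ≠ 1 := Finset.ne_of_mem_erase hχ
    by_cases hz : (∑ d ∈ DU, χ d) = 0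
    · rw [hz]
      simpa using hc0
    · set A := ‖∑ d ∈ DU, χ d‖^2 with hA'
      have hA : 0 < A := by
        have := norm_pos_iff.mpr hz
        positivity
      have hs := hscvp χ hχ1 hz
      have hsq : 1 + 4 * (lam:ℝ) / A = ((b:ℝ)/a)^2 := by
        rw [← hs, Real.sq_sqrt (by positivity)]
      have : A = c := by
        rw [hc]
        field_simp at hsq ⊢
        nlinarith [hsq]
      linarith [this.le]
  have hsum := parseval (G := G) DU
  rw [hv, hDUcard] at hsum
  have hsplit := Finset.add_sum_erase Finset.univ
    (fun χ : G →* ℂ => ‖∑ d ∈ DU, χ d‖^2) (Finset.mem_univ 1)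
  have h1val : ‖∑ d ∈ DU, (1 : G →* ℂ) d‖^2 = ((m*k : ℕ):ℝ)^2 := by
    simp [MonoidHom.one_apply, hDUcard]
  have hv1 : 1 ≤ v := by rw [← hv]; exact Fintype.card_pos
  have hErase : ∑ χ ∈ Finset.univ.erase (1 : G →* ℂ),
      ‖∑ d ∈ DU, χ d‖^2 ≤ ((v:ℝ) - 1) * c := by
    have hb := Finset.sum_le_card_nsmul _ _ c hterm
    have hcarde : (Finset.univ.erase (1 : G →* ℂ)).card = v - 1 := by
      rw [Finset.card_erase_of_mem (Finset.mem_univ _), Finset.card_univ,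
        card_dual, hv]
    rw [hcarde, nsmul_eq_mul] at hb
    have : ((v - 1 : ℕ):ℝ) = (v:ℝ) - 1 := by push_cast [hv1]; ring
    rwa [this] at hb
  have H : (v:ℝ)*((m:ℝ)*k) - ((m:ℝ)*k)^2 ≤ ((v:ℝ) - 1) * c := by
    have h2 := hsplit
    rw [hsum, h1val] at h2
    push_cast at h2 ⊢
    linarith [hErase, h2]
  have hkeyR : (lam:ℝ)*((v:ℝ)-1) = (k:ℝ)^2*((m:ℝ)-1) := by exact_mod_cast hkeyZ
  have H2 : ((v:ℝ)*((m:ℝ)*k) - ((m:ℝ)*k)^2) * ((b:ℝ)^2 - (a:ℝ)^2)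
      ≤ 4*(a:ℝ)^2*(k:ℝ)^2*((m:ℝ)-1) := by
    calc ((v:ℝ)*((m:ℝ)*k) - ((m:ℝ)*k)^2) * ((b:ℝ)^2 - (a:ℝ)^2)
        ≤ (((v:ℝ) - 1) * c) * ((b:ℝ)^2 - (a:ℝ)^2) :=
          mul_le_mul_of_nonneg_right H hB.le
      _ = 4*(a:ℝ)^2*((lam:ℝ)*((v:ℝ)-1)) := by
          rw [hc]; field_simp
      _ = 4*(a:ℝ)^2*(k:ℝ)^2*((m:ℝ)-1) := by rw [hkeyR]; ring
  have HQ : ((v:ℚ)*((m:ℚ)*k) - ((m:ℚ)*k)^2) * ((b:ℚ)^2 - (a:ℚ)^2)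
      ≤ 4*(a:ℚ)^2*(k:ℚ)^2*((m:ℚ)-1) := by exact_mod_cast H2
  have hkQ : (0:ℚ) < k := by exact_mod_cast (show 0 < k by omega)
  have hBQ : (0:ℚ) < (b:ℚ)^2 - (a:ℚ)^2 := by
    have h1 : (a:ℚ) < b := by exact_mod_cast hab
    have h2 : (0:ℚ) < a := by exact_mod_cast ha
    nlinarith
  have hmQ : (0:ℚ) < m := by exact_mod_cast (show 0 < m by omega)
  have hmbQ : (0:ℚ) < (m:ℚ)*((b:ℚ)^2 - (a:ℚ)^2) := mul_pos hmQ hBQ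
  rw [div_le_iff₀ hkQ,
    show ((m:ℚ) + 4*(a:ℚ)^2*((m:ℚ)-1)/((m:ℚ)*((b:ℚ)^2-(a:ℚ)^2))) * k
      = (m:ℚ)*k + (4*(a:ℚ)^2*((m:ℚ)-1)*k)/((m:ℚ)*((b:ℚ)^2-(a:ℚ)^2)) from by ring,
    ← sub_le_iff_le_add', le_div_iff₀ hmbQ]
  apply le_of_mul_le_mul_right _ hkQ
  linear_combination HQ

theorem sedf_scvp_asymptotic_nonexistence (m lam a b : ℕ) (hm : 2 < m)
    (hlam : 0 < lam) (ha : 0 < a) (hab : a < b) (hco : Nat.Coprime a b) :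
    (∀ (G : Type) [CommGroup G] [Fintype G] [DecidableEq G]
        (v k : ℕ) (D : Fin m → Finset G),
        IsSEDF v m k lam D → 1 < k → SCVP lam (Finset.univ.biUnion D) a b →
          (v : ℚ) / k ≤ m + 4 * a ^ 2 * ((m : ℚ) - 1) / (m * ((b : ℚ) ^ 2 - a ^ 2))) ∧
    ∃ K : ℕ, ∀ k, K ≤ k →
      ∀ (G : Type) [CommGroup G] [Fintype G] [DecidableEq G]
        (v : ℕ) (D : Fin m → Finset G),
        ¬ (IsSEDF v m k lam D ∧ 1 < k ∧ SCVP lam (Finset.univ.biUnion D) a b) := by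
  constructor
  · intro G _ _ _ v k D hsedf hk hscvp
    exact main_bound hm hlam ha hab hsedf hk hscvp
  · refine ⟨lam * (m + 4*a^2) + 1, fun k hK G _ _ _ v D h => ?_⟩
    obtain ⟨hsedf, hk, hscvp⟩ := h
    have hbound := main_bound hm hlam ha hab hsedf hk hscvp
    have hkeyZ := sedf_count hsedf
    have hkQ : (0:ℚ) < k := by exact_mod_cast (show 0 < k by omega)
    have hmQ : (3:ℚ) ≤ m := by exact_mod_cast hm
    have hlamQ : (1:ℚ) ≤ lam := by exact_mod_cast hlam
    have haQ : (1:ℚ) ≤ a := by exact_mod_cast ha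
    have hBQ : (1:ℚ) ≤ (b:ℚ)^2 - (a:ℚ)^2 := by
      have h1 : a^2 + 1 ≤ b^2 := by nlinarith [hab]
      have h2 : ((a^2+1:ℕ):ℚ) ≤ ((b^2:ℕ):ℚ) := by exact_mod_cast h1
      push_cast at h2; linarith
    have hkeyQ : (lam:ℚ)*((v:ℚ)-1) = (k:ℚ)^2*((m:ℚ)-1) := by exact_mod_cast hkeyZ
    have hKQ : (lam:ℚ)*((m:ℚ)+4*(a:ℚ)^2) + 1 ≤ k := by exact_mod_cast hK
    have hsmall : 4*(a:ℚ)^2*((m:ℚ)-1)/((m:ℚ)*((b:ℚ)^2-(a:ℚ)^2)) ≤ 4*(a:ℚ)^2 := by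
      rw [div_le_iff₀ (by nlinarith)]
      have hx : (m:ℚ) - 1 ≤ (m:ℚ)*((b:ℚ)^2-(a:ℚ)^2) := by nlinarith
      nlinarith [hx, sq_nonneg (a:ℚ)]
    have h1 : 2*(k:ℚ)^2 ≤ (k:ℚ)^2*((m:ℚ)-1) := by nlinarith [sq_nonneg (k:ℚ)]
    have h2 : (k:ℚ)*((lam:ℚ)*((m:ℚ)+4*(a:ℚ)^2)+1) ≤ (k:ℚ)*(k:ℚ) :=
      mul_le_mul_of_nonneg_left hKQ hkQ.le
    have n1 : (0:ℚ) ≤ (k:ℚ)*(lam:ℚ)*(m:ℚ) := by positivity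
    have n2 : (0:ℚ) ≤ (k:ℚ)*(lam:ℚ)*(a:ℚ)^2 := by positivity
    have e5 : (lam:ℚ)*((((m:ℚ) + 4*(a:ℚ)^2))*k) < (lam:ℚ)*(v:ℚ) := by
      linarith [hkeyQ, h1, h2, n1, n2, hkQ, hlamQ]
    have hlow : ((m:ℚ) + 4*(a:ℚ)^2) * k < v :=
      lt_of_mul_lt_mul_left e5 (by linarith)
    have hfin : (v:ℚ)/k ≤ (m:ℚ) + 4*(a:ℚ)^2 := le_trans hbound (by linarith)
    rw [div_le_iff₀ hkQ] at hfin
    linarith
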